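/- arXiv:2004.05279 — 3 statements merged into one kernel-verified Lean document; each statement's English description precedes it below -/
import Mathlib

section
/- For all x ≥ 0, y > 0, x₀ ≥ 0, y₀ > 0, the function f(x,y) = y·log(1 + x/y) satisfies f(x,y) ≤ f(x₀,y₀) + [log(1 + x₀/y₀) − x₀/(x₀+y₀)]·(y − y₀) + [y₀/(x₀+y₀)]·(x − x₀). -/
/-- First-order Taylor expansion of f(x,y) = y·log(1 + x/y) at (x₀,y₀) is a
global over-estimator. -/
theorem taylor_overestimates_perspective (x y x₀ y₀ : ℝ)
    (hx : 0 ≤ x) (hy : 0 < y) (hx₀ : 0 ≤ x₀) (hy₀ : 0 < y₀) :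
    y * Real.log (1 + x / y) ≤
      y₀ * Real.log (1 + x₀ / y₀)
        + (Real.log (1 + x₀ / y₀) - x₀ / (x₀ + y₀)) * (y - y₀)
        + (y₀ / (x₀ + y₀)) * (x - x₀) := by
  have h1 : 0 < 1 + x / y := by positivity
  have h2 : 0 < 1 + x₀ / y₀ := by positivity
  have hs : 0 < x₀ + y₀ := by positivity
  set t : ℝ := (1 + x / y) / (1 + x₀ / y₀) with ht
  have hlt : Real.log t = Real.log (1 + x / y) - Real.log (1 + x₀ / y₀) :=
    Real.log_div (ne_of_gt h1) (ne_of_gt h2)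
  have hlog : Real.log t ≤ t - 1 := Real.log_le_sub_one_of_pos (by positivity)
  have key : y * Real.log t ≤ y * (t - 1) := by
    exact mul_le_mul_of_nonneg_left hlog hy.le
  have heq : y * (t - 1) = (x * y₀ - x₀ * y) / (x₀ + y₀) := by
    rw [ht]
    field_simp
    ring
  have hrhs : y₀ * Real.log (1 + x₀ / y₀)
        + (Real.log (1 + x₀ / y₀) - x₀ / (x₀ + y₀)) * (y - y₀)
        + (y₀ / (x₀ + y₀)) * (x - x₀)
      = y * Real.log (1 + x₀ / y₀) + (x * y₀ - x₀ * y) / (x₀ + y₀) := by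
    field_simp
    ring
  rw [hrhs]
  have hmul : y * Real.log t = y * Real.log (1 + x / y) - y * Real.log (1 + x₀ / y₀) := by rw [hlt]; ring
  linarith [key, heq, hmul]
end

section
/- For fixed a > b > 0 and total number of bits requirement m > 0, the set of feasible pairs (t, p̃) with t > 0, p̃ ≥ 0 satisfying t·log(1 + a·p̃/t) − t·log(1 + b·p̃/t) ≥ m is a convex subset of ℝ². -/
open Real Set

lemma hasDerivAt_f (a b : ℝ) (ha : 0 < a) (hb : 0 < b) {x : ℝ} (hx : 0 ≤ x) :
    HasDerivAt (fun x => Real.log (1 + a * x) - Real.log (1 + b * x))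
      (a / (1 + a * x) - b / (1 + b * x)) x := by
  have h1 : (0:ℝ) < 1 + a * x := by positivity
  have h2 : (0:ℝ) < 1 + b * x := by positivity
  have da : HasDerivAt (fun x => Real.log (1 + a * x)) (a / (1 + a * x)) x := by
    have := ((hasDerivAt_const x (1:ℝ)).add ((hasDerivAt_id x).const_mul a)).log h1.ne'
    simpa [mul_comm] using this
  have db : HasDerivAt (fun x => Real.log (1 + b * x)) (b / (1 + b * x)) x := by
    have := ((hasDerivAt_const x (1:ℝ)).add ((hasDerivAt_id x).const_mul b)).log h2.ne'
    simpa [mul_comm] using this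
  exact da.sub db

lemma concave_f (a b : ℝ) (hb : 0 < b) (hab : b < a) :
    ConcaveOn ℝ (Set.Ici 0) (fun x => Real.log (1 + a * x) - Real.log (1 + b * x)) := by
  have ha : 0 < a := hb.trans hab
  have hint : interior (Set.Ici (0:ℝ)) = Set.Ioi 0 := interior_Ici
  have hderiv : ∀ x ∈ interior (Set.Ici (0:ℝ)),
      deriv (fun x => Real.log (1 + a * x) - Real.log (1 + b * x)) x
        = (a - b) / ((1 + a * x) * (1 + b * x)) := by
    intro x hx
    rw [hint] at hx
    have hx0 : (0:ℝ) ≤ x := le_of_lt hx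
    have h1 : (0:ℝ) < 1 + a * x := by positivity
    have h2 : (0:ℝ) < 1 + b * x := by positivity
    rw [(hasDerivAt_f a b ha hb hx0).deriv]
    field_simp
    ring
  apply AntitoneOn.concaveOn_of_deriv (convex_Ici 0)
  · apply ContinuousOn.sub
    · apply ContinuousOn.log (by fun_prop)
      intro x hx
      have : (0:ℝ) ≤ x := hx
      positivity
    · apply ContinuousOn.log (by fun_prop)
      intro x hx
      have : (0:ℝ) ≤ x := hx
      positivity
  · intro x hx
    rw [hint] at hx
    exact (hasDerivAt_f a b ha hb hx.le).differentiableAt.differentiableWithinAt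
  · intro x hx y hy hxy
    rw [hderiv x hx, hderiv y hy]
    rw [hint] at hx hy
    have hx0 : (0:ℝ) < x := hx
    have hy0 : (0:ℝ) < y := hy
    apply div_le_div_of_nonneg_left (by linarith) (by positivity)
    have h1 : 1 + a * x ≤ 1 + a * y := by nlinarith
    have h2 : 1 + b * x ≤ 1 + b * y := by nlinarith
    exact mul_le_mul h1 h2 (by positivity) (by positivity)

/-- For a > b > 0 and m > 0, the set of (t,p̃) with t > 0, p̃ ≥ 0 and
t·log(1+a·p̃/t) − t·log(1+b·p̃/t) ≥ m is convex. -/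
theorem secure_offloading_constraint_convex (a b m : ℝ) (hb : 0 < b)
    (hab : b < a) (hm : 0 < m) :
    Convex ℝ {q : ℝ × ℝ | 0 < q.1 ∧ 0 ≤ q.2 ∧
      m ≤ q.1 * Real.log (1 + a * q.2 / q.1) - q.1 * Real.log (1 + b * q.2 / q.1)} := by
  have hconc := concave_f a b hb hab
  rintro ⟨t1, p1⟩ ⟨ht1, hp1, hc1⟩ ⟨t2, p2⟩ ⟨ht2, hp2, hc2⟩ α β hα hβ hαβ
  rcases eq_or_lt_of_le hα with rfl | hα
  · simp only [zero_add] at hαβ; subst hαβ; simpa using ⟨ht2, hp2, hc2⟩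
  rcases eq_or_lt_of_le hβ with rfl | hβ
  · simp only [add_zero] at hαβ; subst hαβ; simpa using ⟨ht1, hp1, hc1⟩
  set t := α * t1 + β * t2 with ht_def
  set p := α * p1 + β * p2 with hp_def
  have ht : 0 < t := by positivity
  refine ⟨by simpa using ht, by simp [smul_eq_mul]; positivity, ?_⟩
  simp only [Prod.smul_mk, Prod.mk_add_mk, smul_eq_mul]
  -- key concavity application
  set w1 := α * t1 / t with hw1
  set w2 := β * t2 / t with hw2
  have hw1n : 0 ≤ w1 := by positivity
  have hw2n : 0 ≤ w2 := by positivity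
  have hwsum : w1 + w2 = 1 := by
    rw [hw1, hw2, ← add_div, ht_def, div_self]; positivity
  have hmem1 : p1 / t1 ∈ Set.Ici (0:ℝ) := by
    simp only [Set.mem_Ici]; positivity
  have hmem2 : p2 / t2 ∈ Set.Ici (0:ℝ) := by
    simp only [Set.mem_Ici]; positivity
  have hkey := hconc.2 hmem1 hmem2 hw1n hw2n hwsum
  simp only [smul_eq_mul] at hkey
  have hcomb : w1 * (p1 / t1) + w2 * (p2 / t2) = p / t := by
    rw [hw1, hw2]; field_simp; ring
  rw [hcomb] at hkey
  -- multiply by t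
  have hmul := mul_le_mul_of_nonneg_left hkey ht.le
  have hrw : t * (Real.log (1 + a * (p / t)) - Real.log (1 + b * (p / t)))
      = t * Real.log (1 + a * p / t) - t * Real.log (1 + b * p / t) := by
    rw [mul_div_assoc, mul_div_assoc]; ring
  have hrhs : t * (w1 * (Real.log (1 + a * (p1 / t1)) - Real.log (1 + b * (p1 / t1)))
        + w2 * (Real.log (1 + a * (p2 / t2)) - Real.log (1 + b * (p2 / t2))))
      = α * (t1 * Real.log (1 + a * p1 / t1) - t1 * Real.log (1 + b * p1 / t1))
        + β * (t2 * Real.log (1 + a * p2 / t2) - t2 * Real.log (1 + b * p2 / t2)) := by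
    rw [hw1, hw2]
    rw [mul_div_assoc a p1 t1, mul_div_assoc b p1 t1, mul_div_assoc a p2 t2,
      mul_div_assoc b p2 t2]
    field_simp
  rw [hrhs, hrw] at hmul
  calc m = α * m + β * m := by rw [← add_mul, hαβ, one_mul]
    _ ≤ _ := by
        refine le_trans (add_le_add (mul_le_mul_of_nonneg_left hc1 hα.le)
          (mul_le_mul_of_nonneg_left hc2 hβ.le)) hmul
end

section
/- The constraint set defined by τ ≥ b·p̃, N ≤ a·p̃, and t·log(1 + N/t) − t·log(1 + τ/t) ≥ m/B (in variables t > 0, p̃, τ, N ≥ 0) projects onto the same set of (t, p̃) as the original constraint t·log(1 + a·p̃/t) − t·log(1 + b·p̃/t) ≥ m/B, provided a > b > 0 and m, B > 0. -/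
/-- The auxiliary-variable reformulation (τ ≥ b·p̃, N ≤ a·p̃, rate constraint in
τ, N) projects onto the same set of (t, p̃) as the original secrecy constraint. -/
theorem auxiliary_reformulation_equiv (a b m B : ℝ) (hb : 0 < b) (hab : b < a)
    (hm : 0 < m) (hB : 0 < B) :
    {q : ℝ × ℝ | 0 < q.1 ∧ 0 ≤ q.2 ∧ ∃ τ N : ℝ, 0 ≤ τ ∧ 0 ≤ N ∧
        b * q.2 ≤ τ ∧ N ≤ a * q.2 ∧
        m / B ≤ q.1 * Real.log (1 + N / q.1) - q.1 * Real.log (1 + τ / q.1)} =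
      {q : ℝ × ℝ | 0 < q.1 ∧ 0 ≤ q.2 ∧
        m / B ≤ q.1 * Real.log (1 + a * q.2 / q.1)
          - q.1 * Real.log (1 + b * q.2 / q.1)} := by
  ext ⟨t, p⟩
  simp only [Set.mem_setOf_eq]
  constructor
  · rintro ⟨ht, hp, τ, N, hτ, hN, hbτ, hNa, hrate⟩
    refine ⟨ht, hp, le_trans hrate ?_⟩
    have h1 : Real.log (1 + N / t) ≤ Real.log (1 + a * p / t) := by
      apply Real.log_le_log (by positivity)
      gcongr
    have h2 : Real.log (1 + b * p / t) ≤ Real.log (1 + τ / t) := by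
      apply Real.log_le_log (by positivity)
      gcongr
    have := mul_le_mul_of_nonneg_left h1 ht.le
    have := mul_le_mul_of_nonneg_left h2 ht.le
    linarith
  · rintro ⟨ht, hp, hrate⟩
    exact ⟨ht, hp, b * p, a * p, mul_nonneg hb.le hp, mul_nonneg (hb.trans hab).le hp, le_refl _, le_refl _, hrate⟩
end
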